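/- Let r > 0, Δ > 0, ν ≥ 0, σ ∈ (0,1], β > 0 with βΔ ≤ 1, and let μ ∈ [0,1] and p ∈ [0,1] with p ≤ βΔ. Define c₁ = σβΔ/(e^{(r+ν)Δ} − 1 + σβΔ). Then e^{−rΔ}·((1 − σ·μ·p)·c₁ + σ·μ·p) ≤ c₁·e^{νΔ}. -/

import Mathlib

/-- Key inequality showing the Bellman operator preserves the lower bound set:
`e^{-rΔ}((1 - σμp)c₁ + σμp) ≤ c₁e^{νΔ}` where
`c₁ = σβΔ/(e^{(r+ν)Δ} - 1 + σβΔ)`. -/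
theorem stmt_17 (r Δ ν σ β μ p : ℝ) (hr : 0 < r) (hΔ : 0 < Δ) (hν : 0 ≤ ν)
    (hσ : σ ∈ Set.Ioc (0:ℝ) 1) (hβ : 0 < β) (hβΔ : β * Δ ≤ 1)
    (hμ : μ ∈ Set.Icc (0:ℝ) 1) (hp : p ∈ Set.Icc (0:ℝ) 1) (hpβ : p ≤ β * Δ) :
    Real.exp (-(r*Δ)) *
        ((1 - σ*μ*p) * (σ*β*Δ / (Real.exp ((r+ν)*Δ) - 1 + σ*β*Δ)) + σ*μ*p)
      ≤ σ*β*Δ / (Real.exp ((r+ν)*Δ) - 1 + σ*β*Δ) * Real.exp (ν*Δ) := by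
  have hσ0 := hσ.1
  have hE1 : 1 < Real.exp ((r+ν)*Δ) := by
    have : 0 < (r+ν)*Δ := by positivity
    have h2 := Real.add_one_le_exp ((r+ν)*Δ)
    linarith
  have hs : 0 < σ*β*Δ := by positivity
  have hD : 0 < Real.exp ((r+ν)*Δ) - 1 + σ*β*Δ := by linarith
  have hq : σ*μ*p ≤ σ*β*Δ := by
    nlinarith [hμ.1, hμ.2, hp.1, mul_le_mul_of_nonneg_left hpβ hσ0.le,
      mul_nonneg hσ0.le hp.1]
  have key : (1 - σ*μ*p) * (σ*β*Δ / (Real.exp ((r+ν)*Δ) - 1 + σ*β*Δ)) + σ*μ*p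
      ≤ σ*β*Δ / (Real.exp ((r+ν)*Δ) - 1 + σ*β*Δ) * Real.exp ((r+ν)*Δ) := by
    have hrw : (1 - σ*μ*p) * (σ*β*Δ / (Real.exp ((r+ν)*Δ) - 1 + σ*β*Δ)) + σ*μ*p
        = ((1 - σ*μ*p) * (σ*β*Δ) + σ*μ*p * (Real.exp ((r+ν)*Δ) - 1 + σ*β*Δ))
          / (Real.exp ((r+ν)*Δ) - 1 + σ*β*Δ) := by
      rw [mul_div_assoc', div_add' _ _ _ hD.ne']
    rw [hrw, div_mul_eq_mul_div, div_le_div_iff₀ hD hD]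
    nlinarith [mul_le_mul_of_nonneg_right hq (by linarith : (0:ℝ) ≤ Real.exp ((r+ν)*Δ) - 1)]
  have hνΔ : Real.exp (ν*Δ) = Real.exp ((r+ν)*Δ) * Real.exp (-(r*Δ)) := by
    rw [← Real.exp_add]; ring_nf
  rw [hνΔ]
  calc Real.exp (-(r*Δ)) *
        ((1 - σ*μ*p) * (σ*β*Δ / (Real.exp ((r+ν)*Δ) - 1 + σ*β*Δ)) + σ*μ*p)
      ≤ Real.exp (-(r*Δ)) *
        (σ*β*Δ / (Real.exp ((r+ν)*Δ) - 1 + σ*β*Δ) * Real.exp ((r+ν)*Δ)) :=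
        mul_le_mul_of_nonneg_left key (Real.exp_pos _).le
    _ = σ*β*Δ / (Real.exp ((r+ν)*Δ) - 1 + σ*β*Δ) * (Real.exp ((r+ν)*Δ) * Real.exp (-(r*Δ))) := by
        ring
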